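/- arXiv:1001.0472 — 9 statements merged into one kernel-verified Lean document; each statement's English description precedes it below -/
import Mathlib

section
/- If I is an ideal of A, then I ⋈^f J := {(i, f(i)+j) | i ∈ I, j ∈ J} is an ideal of A ⋈^f J, and the quotient (A ⋈^f J)/(I ⋈^f J) is isomorphic to A/I. -/
variable {A B : Type*} [CommRing A] [CommRing B]

/-- The amalgamation `A ⋈^f J = {(a, f a + j) | a ∈ A, j ∈ J}` as a subring of `A × B`. -/
def amalg (f : A →+* B) (J : Ideal B) : Subring (A × B) where
  carrier := {p : A × B | ∃ a : A, ∃ j ∈ J, p = (a, f a + j)}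
  zero_mem' := ⟨0, 0, J.zero_mem, by simp [Prod.ext_iff]⟩
  one_mem' := ⟨1, 0, J.zero_mem, by simp [Prod.ext_iff]⟩
  add_mem' := by
    rintro _ _ ⟨a, j, hj, rfl⟩ ⟨a', j', hj', rfl⟩
    exact ⟨a + a', j + j', J.add_mem hj hj', by simp [Prod.ext_iff]; ring⟩
  neg_mem' := by
    rintro _ ⟨a, j, hj, rfl⟩
    exact ⟨-a, -j, J.neg_mem hj, by simp [Prod.ext_iff]; ring⟩
  mul_mem' := by
    rintro _ _ ⟨a, j, hj, rfl⟩ ⟨a', j', hj', rfl⟩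
    refine ⟨a * a', f a * j' + j * f a' + j * j', ?_, by simp [Prod.ext_iff]; ring⟩
    exact J.add_mem (J.add_mem (J.mul_mem_left _ hj') (J.mul_mem_right _ hj))
      (J.mul_mem_right _ hj)

/-- The subring `f(A) + J` of `B`. -/
def fAJ (f : A →+* B) (J : Ideal B) : Subring B where
  carrier := {b : B | ∃ a : A, ∃ j ∈ J, b = f a + j}
  zero_mem' := ⟨0, 0, J.zero_mem, by simp⟩
  one_mem' := ⟨1, 0, J.zero_mem, by simp⟩
  add_mem' := by
    rintro _ _ ⟨a, j, hj, rfl⟩ ⟨a', j', hj', rfl⟩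
    exact ⟨a + a', j + j', J.add_mem hj hj', by simp; ring⟩
  neg_mem' := by
    rintro _ ⟨a, j, hj, rfl⟩
    exact ⟨-a, -j, J.neg_mem hj, by simp; ring⟩
  mul_mem' := by
    rintro _ _ ⟨a, j, hj, rfl⟩ ⟨a', j', hj', rfl⟩
    refine ⟨a * a', f a * j' + j * f a' + j * j', ?_, by simp; ring⟩
    exact J.add_mem (J.add_mem (J.mul_mem_left _ hj') (J.mul_mem_right _ hj))
      (J.mul_mem_right _ hj)

/-- If `I` is an ideal of `A`, then `I ⋈^f J := {(i, f i + j) | i ∈ I, j ∈ J}` is an ideal of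
`A ⋈^f J`, and `(A ⋈^f J)/(I ⋈^f J) ≃ A/I`. -/
theorem amalg_ideal_quotient (f : A →+* B) (J : Ideal B) (I : Ideal A) :
    ∃ K : Ideal (amalg f J),
      (K : Set (amalg f J)) =
        {x : amalg f J | ∃ i ∈ I, ∃ j ∈ J, (x : A × B) = (i, f i + j)} ∧
      Nonempty ((amalg f J ⧸ K) ≃+* A ⧸ I) := by
  set ψ : amalg f J →+* A ⧸ I :=
    (Ideal.Quotient.mk I).comp ((RingHom.fst A B).comp (amalg f J).subtype) with hψ
  refine ⟨RingHom.ker ψ, ?_, ?_⟩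
  · ext x
    simp only [SetLike.mem_coe, RingHom.mem_ker, hψ, RingHom.comp_apply, Set.mem_setOf_eq,
      Ideal.Quotient.eq_zero_iff_mem]
    constructor
    · intro hx
      obtain ⟨a, j, hj, hx'⟩ := x.2
      have h1 : (x : A × B).1 = a := by rw [hx']
      exact ⟨a, h1 ▸ hx, j, hj, hx'⟩
    · rintro ⟨i, hi, j, hj, hx'⟩
      have : (x : A × B).1 = i := by rw [hx']
      simpa [this] using hi
  · refine ⟨RingHom.quotientKerEquivOfSurjective ?_⟩
    intro y
    obtain ⟨a, rfl⟩ := Ideal.Quotient.mk_surjective y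
    exact ⟨⟨(a, f a), a, 0, J.zero_mem, by simp⟩, rfl⟩
end

section
/- The map γ : A ⋈^f J → (f(A)+J)/J sending (a, f(a)+j) to the class of f(a) is a surjective ring homomorphism with kernel f⁻¹(J) × J; hence (A ⋈^f J)/(f⁻¹(J) × J) is isomorphic to (f(A)+J)/J. -/
variable {A B : Type*} [CommRing A] [CommRing B]

/-- The homomorphism `A ⋈^f J → f(A)+J`, `(a, f a + j) ↦ f a`. -/
def amalgDelta (f : A →+* B) (J : Ideal B) : amalg f J →+* fAJ f J where
  toFun x := ⟨f (x : A × B).1, (x : A × B).1, 0, J.zero_mem, by ring⟩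
  map_one' := by ext; simp
  map_mul' x y := by ext; simp
  map_zero' := by ext; simp
  map_add' x y := by ext; simp

/-- `γ : A ⋈^f J → (f(A)+J)/J`, `(a, f a + j) ↦ f a + J`, is a surjective ring homomorphism with
kernel `f⁻¹(J) × J`; hence `(A ⋈^f J)/(f⁻¹(J) × J) ≃ (f(A)+J)/J`. -/
theorem amalg_gamma (f : A →+* B) (J : Ideal B) :
    ∃ γ : amalg f J →+* (fAJ f J) ⧸ (J.comap (fAJ f J).subtype),
      (∀ x : amalg f J,
        γ x = Ideal.Quotient.mk (J.comap (fAJ f J).subtype)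
          ⟨f (x : A × B).1, (x : A × B).1, 0, J.zero_mem, by ring⟩) ∧
      Function.Surjective γ ∧
      (RingHom.ker γ : Set (amalg f J)) =
        {x : amalg f J | ∃ a : A, ∃ j ∈ J, f a ∈ J ∧ (x : A × B) = (a, j)} ∧
      Nonempty ((amalg f J ⧸ RingHom.ker γ) ≃+* (fAJ f J) ⧸ (J.comap (fAJ f J).subtype)) := by
  set Q := J.comap (fAJ f J).subtype with hQ
  refine ⟨(Ideal.Quotient.mk Q).comp (amalgDelta f J), fun x => rfl, ?_, ?_, ?_⟩
  · -- surjectivity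
    intro q
    obtain ⟨b, rfl⟩ := Ideal.Quotient.mk_surjective q
    obtain ⟨a, j, hj, hb⟩ := b.2
    refine ⟨⟨(a, f a + j), a, j, hj, rfl⟩, ?_⟩
    simp only [RingHom.comp_apply]
    rw [Ideal.Quotient.mk_eq_mk_iff_sub_mem]
    show (f a : B) - b ∈ J
    rw [hb]; simpa using J.neg_mem hj
  · -- kernel
    ext x
    obtain ⟨a, j, hj, hx⟩ := x.2
    simp only [Set.mem_setOf_eq, SetLike.mem_coe, RingHom.mem_ker, RingHom.comp_apply,
      Ideal.Quotient.eq_zero_iff_mem]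
    constructor
    · intro h
      have hfa : f a ∈ J := by
        have : f (x : A × B).1 ∈ J := h
        rwa [hx] at this
      exact ⟨a, f a + j, J.add_mem hfa hj, hfa, hx⟩
    · rintro ⟨a', j', hj', hfa', hx'⟩
      show f (x : A × B).1 ∈ J
      rw [hx']; exact hfa'
  · -- isomorphism
    exact ⟨RingHom.quotientKerEquivOfSurjective (by
      intro q
      obtain ⟨b, rfl⟩ := Ideal.Quotient.mk_surjective q
      obtain ⟨a, j, hj, hb⟩ := b.2
      refine ⟨⟨(a, f a + j), a, j, hj, rfl⟩, ?_⟩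
      simp only [RingHom.comp_apply]
      rw [Ideal.Quotient.mk_eq_mk_iff_sub_mem]
      show (f a : B) - b ∈ J
      rw [hb]; simpa using J.neg_mem hj)⟩
end

section
/- If f is surjective, then (A ⋈^f J)/(f⁻¹(J) × J) is isomorphic to B/J. -/
variable {A B : Type*} [CommRing A] [CommRing B]

/-- If `f` is surjective, then `(A ⋈^f J)/(f⁻¹(J) × J) ≃ B/J`. -/
theorem amalg_quotient_of_surjective (f : A →+* B) (J : Ideal B)
    (hf : Function.Surjective f) (K : Ideal (amalg f J))
    (hK : (K : Set (amalg f J)) =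
      {x : amalg f J | ∃ a : A, ∃ j ∈ J, f a ∈ J ∧ (x : A × B) = (a, j)}) :
    Nonempty ((amalg f J ⧸ K) ≃+* B ⧸ J) := by

  let φ : amalg f J →+* B ⧸ J :=
    (Ideal.Quotient.mk J).comp (((RingHom.snd A B).comp (amalg f J).subtype))
  have hsurj : Function.Surjective φ := by
    intro b
    obtain ⟨b, rfl⟩ := Ideal.Quotient.mk_surjective b
    obtain ⟨a, rfl⟩ := hf b
    exact ⟨⟨(a, f a + 0), a, 0, J.zero_mem, rfl⟩, by simp [φ]⟩
  have hker : RingHom.ker φ = K := by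
    ext x
    rw [RingHom.mem_ker]
    constructor
    · intro hx
      have hx2 : (x : A × B).2 ∈ J := by
        simpa [φ, Ideal.Quotient.eq_zero_iff_mem] using hx
      obtain ⟨a, j, hj, hxe⟩ := x.2
      have h2 : (x : A × B).2 = f a + j := by rw [hxe]
      have hfa : f a ∈ J := by
        have := J.sub_mem hx2 hj
        rw [h2] at this; simpa using this
      have : x ∈ (K : Set (amalg f J)) := by
        rw [hK]
        exact ⟨a, f a + j, J.add_mem hfa hj, hfa, hxe⟩
      exact this
    · intro hx
      have : x ∈ (K : Set (amalg f J)) := hx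
      rw [hK] at this
      obtain ⟨a, j, hj, hfa, hxe⟩ := this
      have : (x : A × B).2 ∈ J := by rw [hxe]; exact hj
      simpa [φ, Ideal.Quotient.eq_zero_iff_mem] using this
  exact ⟨(Ideal.quotEquivOfEq hker.symm).trans (RingHom.quotientKerEquivOfSurjective hsurj)⟩
end

section
/- Every prime ideal of A ⋈^f J is either of the form P ⋈^f J := {(p, f(p)+j) | p ∈ P, j ∈ J} for some prime ideal P of A, or of the form Q̄^f := {(a, f(a)+j) | a ∈ A, j ∈ J, f(a)+j ∈ Q} for some prime ideal Q of B not containing J. -/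
variable {A B : Type*} [CommRing A] [CommRing B]

/-- The element `(0, j)` of the amalgamation, for `j ∈ J`. -/
def elJ (f : A →+* B) (J : Ideal B) (j : B) (hj : j ∈ J) : amalg f J :=
  ⟨(0, j), 0, j, hj, by simp⟩

/-- The element `(a, f a)` of the amalgamation. -/
def elA (f : A →+* B) (J : Ideal B) (a : A) : amalg f J :=
  ⟨(a, f a), a, 0, J.zero_mem, by simp⟩

@[simp] lemma coe_elJ (f : A →+* B) (J : Ideal B) (j : B) (hj : j ∈ J) :
    ((elJ f J j hj : amalg f J) : A × B) = (0, j) := rfl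

@[simp] lemma coe_elA (f : A →+* B) (J : Ideal B) (a : A) :
    ((elA f J a : amalg f J) : A × B) = (a, f a) := rfl

/-- Every prime ideal of `A ⋈^f J` is either of the form `P ⋈^f J` for a prime `P` of `A`, or of
the form `Q̄^f` for a prime `Q` of `B` not containing `J`. -/
theorem amalg_prime_classification (f : A →+* B) (J : Ideal B)
    (K : Ideal (amalg f J)) (hK : K.IsPrime) :
    (∃ P : Ideal A, P.IsPrime ∧
      (K : Set (amalg f J)) = {x : amalg f J | ∃ p ∈ P, ∃ j ∈ J, (x : A × B) = (p, f p + j)}) ∨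
    (∃ Q : Ideal B, Q.IsPrime ∧ ¬ J ≤ Q ∧
      (K : Set (amalg f J)) =
        {x : amalg f J | ∃ a : A, ∃ j ∈ J, f a + j ∈ Q ∧ (x : A × B) = (a, f a + j)}) := by
  by_cases hcase : ∀ j (hj : j ∈ J), elJ f J j hj ∈ K
  · -- Case 1: `{0} × J ⊆ K`, so `K = P ⋈^f J`.
    refine Or.inl ⟨{
        carrier := {a | elA f J a ∈ K}
        zero_mem' := by
          have h0 : elA f J (0 : A) = 0 := Subtype.ext (by simp [Prod.ext_iff])
          show elA f J 0 ∈ K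
          rw [h0]; exact K.zero_mem
        add_mem' := by
          intro a b ha hb
          have h : elA f J (a + b) = elA f J a + elA f J b :=
            Subtype.ext (by simp [Prod.ext_iff])
          show elA f J (a + b) ∈ K
          rw [h]; exact K.add_mem ha hb
        smul_mem' := by
          intro c a ha
          have h : elA f J (c • a) = elA f J c * elA f J a :=
            Subtype.ext (by simp [Prod.ext_iff, smul_eq_mul])
          show elA f J (c • a) ∈ K
          rw [h]; exact K.mul_mem_left _ ha }, ?_, ?_⟩
    · constructor
      · intro htop
        have h1 : elA f J (1 : A) ∈ K := by
          have : (1 : A) ∈ (⊤ : Ideal A) := trivial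
          rw [← htop] at this
          exact this
        have he : elA f J (1 : A) = 1 := Subtype.ext (by simp [Prod.ext_iff])
        rw [he] at h1
        exact hK.ne_top (Ideal.eq_top_iff_one _ |>.2 h1)
      · intro a b hab
        have h : elA f J (a * b) = elA f J a * elA f J b :=
          Subtype.ext (by simp [Prod.ext_iff])
        have hab' : elA f J a * elA f J b ∈ K := by rw [← h]; exact hab
        exact hK.mem_or_mem hab'
    · ext x
      constructor
      · intro hx
        obtain ⟨a, j, hj, hxeq⟩ := x.2
        refine ⟨a, ?_, j, hj, hxeq⟩
        have h : elA f J a = x - elJ f J j hj :=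
          Subtype.ext (by simp [Prod.ext_iff, hxeq])
        show elA f J a ∈ K
        rw [h]; exact K.sub_mem hx (hcase j hj)
      · rintro ⟨p, hp, j, hj, hxeq⟩
        have h : x = elA f J p + elJ f J j hj :=
          Subtype.ext (by simp [Prod.ext_iff, hxeq])
        rw [h]
        exact K.add_mem hp (hcase j hj)
  · -- Case 2: some `(0, j₀)` is not in `K`.
    push_neg at hcase
    obtain ⟨j0, hj0, hx0⟩ := hcase
    refine Or.inr ⟨{
        carrier := {b | ∀ j (hj : j ∈ J), elJ f J (b * j) (J.mul_mem_left b hj) ∈ K}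
        zero_mem' := by
          intro j hj
          have h : elJ f J ((0 : B) * j) (J.mul_mem_left 0 hj) = 0 :=
            Subtype.ext (by simp [Prod.ext_iff])
          rw [h]; exact K.zero_mem
        add_mem' := by
          intro b b' hb hb' j hj
          have h : elJ f J ((b + b') * j) (J.mul_mem_left _ hj) =
              elJ f J (b * j) (J.mul_mem_left b hj) + elJ f J (b' * j) (J.mul_mem_left b' hj) :=
            Subtype.ext (by simp [Prod.ext_iff, add_mul])
          rw [h]; exact K.add_mem (hb j hj) (hb' j hj)
        smul_mem' := by
          intro c b hb j hj
          have h : elJ f J ((c • b) * j) (J.mul_mem_left _ hj) =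
              elJ f J (b * (c * j)) (J.mul_mem_left b (J.mul_mem_left c hj)) :=
            Subtype.ext (by simp [Prod.ext_iff, smul_eq_mul]; ring)
          rw [h]; exact hb (c * j) (J.mul_mem_left c hj) }, ?_, ?_, ?_⟩
    · constructor
      · intro htop
        have h1 : ∀ j (hj : j ∈ J), elJ f J ((1 : B) * j) (J.mul_mem_left 1 hj) ∈ K := by
          have : (1 : B) ∈ (⊤ : Ideal B) := trivial
          rw [← htop] at this
          exact this
        have he : elJ f J ((1 : B) * j0) (J.mul_mem_left 1 hj0) = elJ f J j0 hj0 :=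
          Subtype.ext (by simp)
        exact hx0 (he ▸ h1 j0 hj0)
      · intro b b' hbb'
        by_contra hcon
        push_neg at hcon
        obtain ⟨hb, hb'⟩ := hcon
        simp only [Submodule.mem_mk, AddSubmonoid.mem_mk, AddSubsemigroup.mem_mk,
          Set.mem_setOf_eq, not_forall] at hb hb'
        obtain ⟨j, hj, hjK⟩ := hb
        obtain ⟨j', hj', hjK'⟩ := hb'
        have hmul : elJ f J (b * j) (J.mul_mem_left b hj) *
            elJ f J (b' * j') (J.mul_mem_left b' hj') =
            elJ f J ((b * b') * (j * j')) (J.mul_mem_left _ (J.mul_mem_left j hj')) :=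
          Subtype.ext (by simp [Prod.ext_iff]; ring)
        have hin : elJ f J ((b * b') * (j * j')) (J.mul_mem_left _ (J.mul_mem_left j hj')) ∈ K :=
          hbb' (j * j') (J.mul_mem_left j hj')
        rw [← hmul] at hin
        rcases hK.mem_or_mem hin with h | h
        · exact hjK h
        · exact hjK' h
    · intro hJQ
      have h := hJQ hj0 j0 hj0
      have hmul : elJ f J (j0 * j0) (J.mul_mem_left j0 hj0) =
          elJ f J j0 hj0 * elJ f J j0 hj0 := Subtype.ext (by simp [Prod.ext_iff])
      rw [hmul] at h
      rcases hK.mem_or_mem h with h' | h' <;> exact hx0 h'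
    · ext x
      constructor
      · intro hx
        obtain ⟨a, j, hj, hxeq⟩ := x.2
        refine ⟨a, j, hj, ?_, hxeq⟩
        intro j' hj'
        have h : elJ f J ((f a + j) * j') (J.mul_mem_left _ hj') = x * elJ f J j' hj' :=
          Subtype.ext (by simp [Prod.ext_iff, hxeq])
        rw [h]
        exact K.mul_mem_right _ hx
      · rintro ⟨a, j, hj, hQ, hxeq⟩
        have h : elJ f J ((f a + j) * j0) (J.mul_mem_left _ hj0) = x * elJ f J j0 hj0 :=
          Subtype.ext (by simp [Prod.ext_iff, hxeq])
        have hin := hQ j0 hj0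
        rw [h] at hin
        rcases hK.mem_or_mem hin with h' | h'
        · exact h'
        · exact absurd h' hx0
end

section
/- For a prime ideal Q of B not containing J, the ideal Q̄^f := {(a, f(a)+j) | a ∈ A, j ∈ J, f(a)+j ∈ Q} is a maximal ideal of A ⋈^f J if and only if Q is a maximal ideal of B. -/
variable {A B : Type*} [CommRing A] [CommRing B]

/-- For a prime ideal `Q` of `B` not containing `J`, the ideal `Q̄^f` is maximal in `A ⋈^f J`
iff `Q` is maximal in `B`. -/
theorem amalg_maximal_iff_B (f : A →+* B) (J : Ideal B) (Q : Ideal B) (hQ : Q.IsPrime)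
    (hJQ : ¬ J ≤ Q) (K : Ideal (amalg f J))
    (hK : (K : Set (amalg f J)) =
      {x : amalg f J | ∃ a : A, ∃ j ∈ J, f a + j ∈ Q ∧ (x : A × B) = (a, f a + j)}) :
    K.IsMaximal ↔ Q.IsMaximal := by
  have memK : ∀ x : amalg f J, x ∈ K ↔
      ∃ a : A, ∃ j ∈ J, f a + j ∈ Q ∧ (x : A × B) = (a, f a + j) := by
    intro x
    rw [← SetLike.mem_coe, hK]
    rfl
  obtain ⟨j₀, hj₀J, hj₀Q⟩ := Set.not_subset.mp hJQ
  constructor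
  · intro hKmax
    rw [Ideal.isMaximal_iff]
    refine ⟨(Ideal.ne_top_iff_one Q).mp hQ.ne_top, ?_⟩
    intro I b hQI hbQ hbI
    have hx : ((0 : A), b * j₀) ∈ amalg f J :=
      ⟨0, b * j₀, J.mul_mem_left b hj₀J, by simp⟩
    set x : amalg f J := ⟨((0 : A), b * j₀), hx⟩ with hxdef
    have hxK : x ∉ K := by
      rw [memK]
      rintro ⟨a, j, hjJ, hQaj, hcoe⟩
      have h2 : b * j₀ = f a + j := congrArg Prod.snd hcoe
      have ha : (0 : A) = a := congrArg Prod.fst hcoe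
      rw [← h2] at hQaj
      rcases hQ.mul_mem_iff_mem_or_mem.mp hQaj with h | h
      · exact hbQ h
      · exact hj₀Q h
    obtain ⟨y, i, hiK, hyx⟩ := hKmax.exists_inv hxK
    obtain ⟨a'', j'', hj'', hQ'', hcoe''⟩ := (memK i).mp hiK
    have h2 : (y : A × B).2 * (b * j₀) + (i : A × B).2 = 1 := by
      have := congrArg (fun z : amalg f J => (z : A × B).2) hyx
      simpa using this
    have hi2Q : (i : A × B).2 ∈ Q := by rw [hcoe'']; exact hQ''
    have h1 : (1 : B) = ((y : A × B).2 * j₀) * b + (i : A × B).2 := by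
      linear_combination -h2
    rw [h1]
    exact I.add_mem (I.mul_mem_left _ hbI) (hQI hi2Q)
  · intro hQmax
    rw [Ideal.isMaximal_iff]
    constructor
    · rw [memK]
      rintro ⟨a, j, hjJ, hQaj, hcoe⟩
      have h2 : (1 : B) = f a + j := congrArg Prod.snd hcoe
      rw [← h2] at hQaj
      exact (Ideal.ne_top_iff_one Q).mp hQ.ne_top hQaj
    · intro I x hKI hxK hxI
      obtain ⟨a, j, hjJ, hxab⟩ := x.2
      have hQab : f a + j ∉ Q := fun h => hxK ((memK x).mpr ⟨a, j, hjJ, h, hxab⟩)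
      obtain ⟨u, q, hqQ, hu⟩ := hQmax.exists_inv hQab
      obtain ⟨v, q₀, hq₀, hv⟩ := hQmax.exists_inv hj₀Q
      set w := u * v * j₀ with hwdef
      have hwJ : w ∈ J := J.mul_mem_left _ hj₀J
      have hy : ((0 : A), w) ∈ amalg f J := ⟨0, w, hwJ, by simp⟩
      set y : amalg f J := ⟨((0 : A), w), hy⟩ with hydef
      have hiQ : (1 : B) - w * (f a + j) ∈ Q := by
        have heq : (1 : B) - w * (f a + j) = (1 - q₀) * q + q₀ := by
          linear_combination (-(v * j₀)) * hu + (q - 1) * hv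
        rw [heq]
        exact Q.add_mem (Q.mul_mem_left _ hqQ) hq₀
      have hiAm : ((1 : A), 1 - w * (f a + j)) ∈ amalg f J :=
        ⟨1, -(w * (f a + j)), J.neg_mem (J.mul_mem_right _ hwJ), by
          rw [Prod.ext_iff]; constructor <;> simp <;> ring⟩
      set i : amalg f J := ⟨((1 : A), 1 - w * (f a + j)), hiAm⟩ with hidef
      have hiK : i ∈ K := by
        rw [memK]
        refine ⟨1, -(w * (f a + j)), J.neg_mem (J.mul_mem_right _ hwJ), ?_, ?_⟩
        · simpa [sub_eq_add_neg] using hiQ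
        · rw [Prod.ext_iff]; constructor <;> simp <;> ring
      have hone : (1 : amalg f J) = y * x + i := by
        apply Subtype.ext
        show (1 : A × B) = (y : A × B) * (x : A × B) + (i : A × B)
        rw [hxab]
        rw [Prod.ext_iff]
        constructor <;> simp <;> ring
      rw [hone]
      exact I.add_mem (I.mul_mem_left _ hxI) (hKI hiK)
end

section
/- Every element of the subring A × (f(A)+J) of A × B is integral of degree at most two over A ⋈^f J; in particular A × (f(A)+J) is integral over A ⋈^f J. -/
variable {A B : Type*} [CommRing A] [CommRing B]

/-- Every element of the subring `A × (f(A)+J)` of `A × B` is integral of degree at most two over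
`A ⋈^f J`; in particular `A × (f(A)+J)` is integral over `A ⋈^f J`. -/
theorem amalg_integral_deg_two (f : A →+* B) (J : Ideal B) :
    (∀ x ∈ (⊤ : Subring A).prod (fAJ f J),
      ∃ p : Polynomial (amalg f J), p.Monic ∧ p.natDegree ≤ 2 ∧
        Polynomial.eval₂ (amalg f J).subtype x p = 0) ∧
    ∀ x ∈ (⊤ : Subring A).prod (fAJ f J), ((amalg f J).subtype).IsIntegralElem x := by
  have key : ∀ x ∈ (⊤ : Subring A).prod (fAJ f J),
      ∃ p : Polynomial (amalg f J), p.Monic ∧ p.natDegree ≤ 2 ∧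
        Polynomial.eval₂ (amalg f J).subtype x p = 0 := by
    rintro ⟨α, β⟩ ⟨-, a', j, hj, rfl⟩
    rcases subsingleton_or_nontrivial ↥(amalg f J) with hs | hn
    · exact ⟨0, Polynomial.monic_zero_iff_subsingleton.2 hs, by simp, by simp⟩
    set u : amalg f J := ⟨(α, f α), α, 0, J.zero_mem, by simp⟩ with hu
    set v : amalg f J := ⟨(a', f a' + j), a', j, hj, rfl⟩ with hv
    refine ⟨(Polynomial.X - Polynomial.C u) * (Polynomial.X - Polynomial.C v),
      (Polynomial.monic_X_sub_C u).mul (Polynomial.monic_X_sub_C v), ?_, ?_⟩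
    · rw [(Polynomial.monic_X_sub_C u).natDegree_mul (Polynomial.monic_X_sub_C v),
        Polynomial.natDegree_X_sub_C, Polynomial.natDegree_X_sub_C]
    · simp only [Polynomial.eval₂_mul, Polynomial.eval₂_sub, Polynomial.eval₂_X,
        Polynomial.eval₂_C]
      show ((α, f a' + j) - (u : A × B)) * ((α, f a' + j) - (v : A × B)) = 0
      rw [hu, hv]
      ext <;> simp
  refine ⟨key, fun x hx => ?_⟩
  obtain ⟨p, hm, -, he⟩ := key x hx
  exact ⟨p, hm, he⟩
end

section
/- The Krull dimension of A ⋈^f J equals max{dim A, dim(f(A)+J)}. In particular, if f is surjective then dim(A ⋈^f J) = dim A. -/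
variable {A B : Type*} [CommRing A] [CommRing B]

section Aux
variable {R S : Type*} [CommRing R] [CommRing S]

lemma length_le_of_ker_le (g : R →+* S) (hg : Function.Surjective g)
    (p : LTSeries (PrimeSpectrum R)) (hker : ∀ i, RingHom.ker g ≤ (p i).asIdeal) :
    (p.length : WithBot ℕ∞) ≤ ringKrullDim S := by
  let q : LTSeries (PrimeSpectrum S) :=
    { length := p.length
      toFun := fun i =>
        ⟨(p i).asIdeal.map g, Ideal.map_isPrime_of_surjective hg (hker i)⟩
      step := fun i => by
        have hlt : (p i.castSucc).asIdeal < (p i.succ).asIdeal :=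
          (PrimeSpectrum.asIdeal_lt_asIdeal _ _).2 (p.step i)
        simp only at *
        simp only [Set.mem_setOf_eq]
        rw [← PrimeSpectrum.asIdeal_lt_asIdeal]
        refine lt_of_le_of_ne (Ideal.map_mono hlt.le) (fun he => hlt.ne ?_)
        simp only [PrimeSpectrum.mk.injEq] at he
        have h1 := Ideal.comap_map_of_surjective g hg (p i.castSucc).asIdeal
        have h2 := Ideal.comap_map_of_surjective g hg (p i.succ).asIdeal
        rw [← RingHom.ker_eq_comap_bot] at h1 h2
        rw [he, h2, sup_eq_left.2 (hker i.succ)] at h1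
        rw [sup_eq_left.2 (hker i.castSucc)] at h1
        exact h1.symm }
  exact Order.LTSeries.length_le_krullDim q

lemma krullDim_le_max {T : Type*} [CommRing T] (g : R →+* S) (h : R →+* T)
    (hg : Function.Surjective g) (hh : Function.Surjective h)
    (hmul : ∀ x y : R, g x = 0 → h y = 0 → x * y = 0) :
    ringKrullDim R ≤ max (ringKrullDim S) (ringKrullDim T) := by
  rw [ringKrullDim, Order.krullDim]
  refine iSup_le fun p => ?_
  have hcase : RingHom.ker g ≤ p.head.asIdeal ∨ RingHom.ker h ≤ p.head.asIdeal := by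
    by_cases hc : RingHom.ker g ≤ p.head.asIdeal
    · exact Or.inl hc
    · obtain ⟨x, hx, hxn⟩ := Set.not_subset.1 hc
      refine Or.inr fun y hy => ?_
      have : x * y ∈ p.head.asIdeal := by
        rw [hmul x y hx hy]; exact Ideal.zero_mem _
      exact ((p.head.isPrime.mem_or_mem this).resolve_left hxn)
  have hmono : ∀ i, p.head ≤ p i := fun i => p.monotone (Fin.zero_le i)
  rcases hcase with hc | hc
  · exact le_max_of_le_left (length_le_of_ker_le g hg p
      (fun i => hc.trans ((PrimeSpectrum.asIdeal_le_asIdeal _ _).2 (hmono i))))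
  · exact le_max_of_le_right (length_le_of_ker_le h hh p
      (fun i => hc.trans ((PrimeSpectrum.asIdeal_le_asIdeal _ _).2 (hmono i))))

end Aux

/-- `dim (A ⋈^f J) = max (dim A) (dim (f(A)+J))`; in particular, if `f` is surjective then
`dim (A ⋈^f J) = dim A`. -/
theorem amalg_krullDim (f : A →+* B) (J : Ideal B) :
    ringKrullDim (amalg f J) = max (ringKrullDim A) (ringKrullDim (fAJ f J)) ∧
    (Function.Surjective f → ringKrullDim (amalg f J) = ringKrullDim A) := by
  set πA : amalg f J →+* A := (RingHom.fst A B).comp (Subring.subtype _) with hπA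
  have hπAs : Function.Surjective πA := fun a =>
    ⟨⟨(a, f a), a, 0, J.zero_mem, by simp⟩, rfl⟩
  set πB : amalg f J →+* fAJ f J :=
    RingHom.codRestrict ((RingHom.snd A B).comp (Subring.subtype _)) (fAJ f J)
      (fun x => by
        obtain ⟨a, j, hj, hx⟩ := x.2
        exact ⟨a, j, hj, by simp [hx]⟩) with hπB
  have hπBs : Function.Surjective πB := by
    rintro ⟨b, a, j, hj, rfl⟩
    exact ⟨⟨(a, f a + j), a, j, hj, rfl⟩, Subtype.ext rfl⟩
  have hmul : ∀ x y : amalg f J, πA x = 0 → πB y = 0 → x * y = 0 := by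
    rintro ⟨⟨x1, x2⟩, hx⟩ ⟨⟨y1, y2⟩, hy⟩ h1 h2
    have hx1 : x1 = 0 := h1
    have hy2 : y2 = 0 := congrArg Subtype.val h2
    apply Subtype.ext
    show (x1 * y1, x2 * y2) = (0 : A × B)
    simp [hx1, hy2]
  have hmain : ringKrullDim (amalg f J) = max (ringKrullDim A) (ringKrullDim (fAJ f J)) := by
    refine le_antisymm (krullDim_le_max πA πB hπAs hπBs hmul) (max_le ?_ ?_)
    · exact ringKrullDim_le_of_surjective πA hπAs
    · exact ringKrullDim_le_of_surjective πB hπBs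
  refine ⟨hmain, fun hf => ?_⟩
  have hg : Function.Surjective (RingHom.codRestrict f (fAJ f J)
      (fun a => ⟨a, 0, J.zero_mem, by simp⟩) : A →+* fAJ f J) := by
    rintro ⟨b, a, j, hj, rfl⟩
    obtain ⟨a', ha'⟩ := hf (f a + j)
    exact ⟨a', Subtype.ext ha'⟩
  rw [hmain, max_eq_left (ringKrullDim_le_of_surjective _ hg)]
end

section
/- If the induced homomorphism f_⋄ : A → f(A)+J is integral, then dim(A ⋈^f J) = dim A. -/
variable {A B : Type*} [CommRing A] [CommRing B]

open Polynomial in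
/-- If the induced homomorphism `f_⋄ : A → f(A)+J` is integral, then
`dim (A ⋈^f J) = dim A`. -/
theorem amalg_krullDim_of_integral (f : A →+* B) (J : Ideal B)
    (hint : ∀ b ∈ fAJ f J, f.IsIntegralElem b) :
    ringKrullDim (amalg f J) = ringKrullDim A := by
  -- the inclusion a ↦ (a, f a)
  set φ : A →+* amalg f J :=
    ((RingHom.id A).prod f).codRestrict (amalg f J).toSubsemiring
      (fun a => ⟨a, 0, J.zero_mem, by simp⟩) with hφ
  letI : Algebra A (amalg f J) := φ.toAlgebra
  have halg : algebraMap A (amalg f J) = φ := rfl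
  -- every element of amalg is integral over A
  have hIntAll : ∀ x : amalg f J, IsIntegral A x := by
    intro x
    obtain ⟨a, j, hj, hx⟩ := x.2
    obtain ⟨p, pmonic, hp⟩ := hint (f a + j) ⟨a, j, hj, rfl⟩
    refine ⟨p * (X - C a), pmonic.mul (monic_X_sub_C a), ?_⟩
    have key : (amalg f J).subtype (eval₂ φ x (p * (X - C a))) = 0 := by
      rw [hom_eval₂]
      have hcomp : ((amalg f J).subtype.comp φ) = (RingHom.id A).prod f := by
        ext a' <;> rfl
      have hxv : ((amalg f J).subtype x : A × B) = (a, f a + j) := hx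
      rw [hcomp, hxv, eval₂_mul]
      have h1 : eval₂ ((RingHom.id A).prod f) ((a : A), f a + j) p
          = (eval₂ (RingHom.id A) a p, eval₂ f (f a + j) p) := by
        apply Prod.ext
        · rw [show (eval₂ ((RingHom.id A).prod f) ((a : A), f a + j) p).1
            = (RingHom.fst A B) (eval₂ ((RingHom.id A).prod f) ((a : A), f a + j) p) from rfl,
            hom_eval₂]
          congr 1
        · rw [show (eval₂ ((RingHom.id A).prod f) ((a : A), f a + j) p).2
            = (RingHom.snd A B) (eval₂ ((RingHom.id A).prod f) ((a : A), f a + j) p) from rfl,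
            hom_eval₂]
          congr 1
      rw [h1, hp]
      simp [Prod.ext_iff, Prod.mul_def]
    exact Subtype.ext (by rw [halg]; simpa using key)
  haveI : Algebra.IsIntegral A (amalg f J) := ⟨hIntAll⟩
  apply le_antisymm
  · -- dim amalg ≤ dim A via strictly monotone comap on prime spectra
    have : StrictMono (fun P : PrimeSpectrum (amalg f J) =>
        (⟨P.asIdeal.comap (algebraMap A (amalg f J)), inferInstance⟩ : PrimeSpectrum A)) := by
      intro P Q hPQ
      rw [← PrimeSpectrum.asIdeal_lt_asIdeal] at hPQ ⊢
      obtain ⟨hle, x, hxQ, hxP⟩ := SetLike.lt_iff_le_and_exists.mp hPQ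
      exact Ideal.comap_lt_comap_of_integral_mem_sdiff hle ⟨hxQ, hxP⟩ (hIntAll x)
    exact Order.krullDim_le_of_strictMono _ this
  · -- dim A ≤ dim amalg via the surjective projection
    refine ringKrullDim_le_of_surjective ((RingHom.fst A B).comp (amalg f J).subtype) ?_
    intro a
    exact ⟨φ a, rfl⟩
end

section
/- For a prime ideal Q of B, one has f⁻¹(Q+J) = {0} if and only if the prime Q̄^f := (A × Q) ∩ (A ⋈^f J) is contained in J₀ := {0} × J. Moreover, if f⁻¹(Q+J) = {0} and Q does not contain J, then Q̄^f is contained in P ⋈^f J for every prime ideal P of A. -/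
variable {A B : Type*} [CommRing A] [CommRing B]

theorem amalg_Qbar_sub_J0_aux (f : A →+* B) (J : Ideal B) (Q : Ideal B)
    (h : f ⁻¹' ((Q + J : Ideal B) : Set B) = {0}) :
    (Set.univ ×ˢ (Q : Set B)) ∩ (amalg f J : Set (A × B)) ⊆
      ({0} : Set A) ×ˢ (J : Set B) := by
  rintro x ⟨⟨-, hbQ⟩, a', j, hj, rfl⟩
  simp only [Set.mem_prod, Set.mem_singleton_iff] at hbQ ⊢
  have hfa : f a' ∈ (Q + J : Ideal B) := by
    have : f a' = (f a' + j) + (-j) := by ring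
    rw [this]
    exact Ideal.add_mem _ (Ideal.mem_sup_left hbQ) (Ideal.mem_sup_right (J.neg_mem hj))
  have ha0 : a' = 0 := by
    have := h ▸ Set.mem_preimage.mpr hfa
    simpa using this
  subst ha0
  exact ⟨rfl, by simpa using hj⟩

/-- For a prime ideal `Q` of `B`: `f⁻¹(Q+J) = {0}` iff `Q̄^f = (A × Q) ∩ (A ⋈^f J) ⊆ J₀ = {0} × J`.
Moreover, if `f⁻¹(Q+J) = {0}` and `Q` does not contain `J`, then `Q̄^f ⊆ P ⋈^f J` for every prime
ideal `P` of `A`. -/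
theorem amalg_Qbar_sub_J0 (f : A →+* B) (J : Ideal B) (Q : Ideal B) (hQ : Q.IsPrime) :
    ((f ⁻¹' ((Q + J : Ideal B) : Set B) = {0}) ↔
      ((Set.univ ×ˢ (Q : Set B)) ∩ (amalg f J : Set (A × B)) ⊆
        ({0} : Set A) ×ˢ (J : Set B))) ∧
    (f ⁻¹' ((Q + J : Ideal B) : Set B) = {0} → ¬ J ≤ Q →
      ∀ P : Ideal A, P.IsPrime →
        (Set.univ ×ˢ (Q : Set B)) ∩ (amalg f J : Set (A × B)) ⊆
          {x : A × B | ∃ p ∈ P, ∃ j ∈ J, x = (p, f p + j)}) := by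
  constructor
  · constructor
    · exact amalg_Qbar_sub_J0_aux f J Q
    · intro h
      ext a
      simp only [Set.mem_preimage, Set.mem_singleton_iff, SetLike.mem_coe]
      constructor
      · intro hfa
        obtain ⟨q, hq, j, hj, hqj⟩ := Submodule.mem_sup.mp hfa
        have hmem : ((a, q) : A × B) ∈ (Set.univ ×ˢ (Q : Set B)) ∩ (amalg f J : Set (A × B)) := by
          refine ⟨⟨trivial, hq⟩, a, -j, J.neg_mem hj, ?_⟩
          have : q = f a + -j := by rw [← hqj]; ring
          simp [this]
        exact (h hmem).1
      · rintro rfl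
        simpa using Ideal.zero_mem (Q + J)
  · intro h _ P hP x hx
    obtain ⟨ha, hb⟩ := amalg_Qbar_sub_J0_aux f J Q h hx
    exact ⟨0, P.zero_mem, x.2, hb, by simp [Prod.ext_iff, Set.eq_of_mem_singleton ha]⟩
end
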